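/- Let p be an odd prime with p ≡ 1 (mod 4), m = 2s with s an odd positive integer and gcd(m,p) = 1, q = p^m, and d = (q−1)/(p+1). Then the set D = {x ∈ F_q^* : Tr_{q/p}(x^d) = 0} is empty. -/

import Mathlib

open scoped Classical

/-- Auxiliary: sum alternating between `y` and `y⁻¹` over `range (2*t)`. -/
lemma alt_sum_aux {F : Type*} [Field F] (y : F) (t : ℕ) :
    ∑ i ∈ Finset.range (2 * t), (if Even i then y else y⁻¹) = t • (y + y⁻¹) := by
  induction t with
  | zero => simp
  | succ t ih =>
    have h2 : 2 * (t + 1) = (2 * t + 1) + 1 := by ring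
    rw [h2, Finset.sum_range_succ, Finset.sum_range_succ, ih]
    have he : Even (2 * t) := ⟨t, by ring⟩
    have ho : ¬ Even (2 * t + 1) := by
      simp [Nat.even_add_one]
    rw [if_pos he, if_neg ho, succ_nsmul]
    ring

/-- for `p ≡ 1 (mod 4)`, `m = 2s` with `s` odd, `gcd(m,p) = 1`,
`q = p^m` and `d = (q-1)/(p+1)`, the set `D = {x ∈ F_q^* : Tr_{q/p}(x^d) = 0}`
is empty. -/
theorem defining_set_empty_p_one_mod_four
    (p m s : ℕ) (hp : p.Prime) (hodd : Odd p) (h4 : p % 4 = 1)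
    (hm : m = 2 * s) (hs : Odd s) (hs0 : 0 < s) (hmp : Nat.gcd m p = 1)
    (q d : ℕ) (hq : q = p ^ m) (hd : d = (q - 1) / (p + 1))
    (F : Type*) [Field F] [Fintype F] [Algebra (ZMod p) F]
    (hF : Fintype.card F = q) :
    (Finset.univ.filter fun x : F =>
      x ≠ 0 ∧ Algebra.trace (ZMod p) F (x ^ d) = 0) = ∅ := by
  haveI : Fact p.Prime := ⟨hp⟩
  have hp2 : 2 ≤ p := hp.two_le
  have hp5 : 5 ≤ p := by omega
  have hm0 : 0 < m := by omega
  haveI hcharF : CharP F p := charP_of_injective_algebraMap (algebraMap (ZMod p) F).injective p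
  haveI : FiniteDimensional (ZMod p) F := Module.Finite.of_finite
  -- finrank equals m
  have hrank : Module.finrank (ZMod p) F = m := by
    have hc := Module.card_eq_pow_finrank (K := ZMod p) (V := F)
    rw [ZMod.card, hF, hq] at hc
    exact (Nat.pow_right_injective hp2 hc).symm
  -- p + 1 divides q - 1 and d * (p+1) = q - 1
  have hdvd : (p + 1) ∣ (q - 1) := by
    have h1 : (p + 1) ∣ p ^ 2 - 1 := by
      obtain ⟨t, rfl⟩ : ∃ t, p = t + 1 := ⟨p - 1, by omega⟩
      refine ⟨t, ?_⟩
      have hh : (t + 1) ^ 2 = (t + 1 + 1) * t + 1 := by ring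
      omega
    have h2 : p ^ 2 - 1 ∣ q - 1 := by
      have := Nat.sub_dvd_pow_sub_pow (p ^ 2) 1 s
      simpa [hq, hm, one_pow, ← pow_mul] using this
    exact h1.trans h2
  have hdpq : d * (p + 1) = q - 1 := by
    rw [hd]; exact Nat.div_mul_cancel hdvd
  -- Frobenius as an AlgEquiv
  let φa : F →ₐ[ZMod p] F :=
    { toRingHom := frobenius F p
      commutes' := fun r => by
        show frobenius F p (algebraMap (ZMod p) F r) = algebraMap (ZMod p) F r
        rw [frobenius_def, ← map_pow, ZMod.pow_card] }
  have hφbij : Function.Bijective φa :=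
    Finite.injective_iff_bijective.mp (φa : F →+* F).injective
  let φ : F ≃ₐ[ZMod p] F := AlgEquiv.ofBijective φa hφbij
  have hφ : ∀ x : F, φ x = x ^ p := fun x => rfl
  have hφpow : ∀ (k : ℕ) (x : F), (φ ^ k) x = x ^ p ^ k := by
    intro k
    induction k with
    | zero => intro x; simp
    | succ k ih =>
      intro x
      rw [pow_succ', AlgEquiv.mul_apply, hφ, ih, ← pow_mul, ← pow_succ]
  -- the map Fin m → Galois group is bijective
  obtain ⟨g, hg⟩ := IsCyclic.exists_generator (α := Fˣ)
  have hog : orderOf g = q - 1 := by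
    rw [orderOf_eq_card_of_forall_mem_zpowers hg, Nat.card_eq_fintype_card, Fintype.card_units, hF]
  have hfbij : Function.Bijective (fun i : Fin m => φ ^ (i : ℕ)) := by
    rw [Fintype.bijective_iff_injective_and_card]
    constructor
    · intro i j hij
      have h := congrArg (fun σ : F ≃ₐ[ZMod p] F => σ (g : F)) hij
      simp only [hφpow] at h
      have hu : g ^ p ^ (i : ℕ) = g ^ p ^ (j : ℕ) := by
        ext; push_cast; exact h
      have hmod : p ^ (i : ℕ) ≡ p ^ (j : ℕ) [MOD q - 1] := by
        rw [← hog]; exact pow_eq_pow_iff_modEq.mp hu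
      have hlt : ∀ k : ℕ, k < m → p ^ k < q - 1 := by
        intro k hk
        have h1 : p ^ k ≤ p ^ (m - 1) := Nat.pow_le_pow_right (by omega) (by omega)
        have h2 : p ^ (m - 1) * 5 ≤ p ^ (m - 1) * p := Nat.mul_le_mul_left _ (by omega)
        have h3 : p ^ (m - 1) * p = p ^ m := by
          rw [← pow_succ]; congr 1; omega
        have h4 : 1 ≤ p ^ k := Nat.one_le_pow _ _ (by omega)
        rw [hq]; omega
      have := (Nat.ModEq.eq_of_lt_of_lt hmod (hlt _ i.isLt) (hlt _ j.isLt))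
      exact Fin.ext (Nat.pow_right_injective hp2 this)
    · rw [Fintype.card_fin, ← Nat.card_eq_fintype_card, IsGalois.card_aut_eq_finrank, hrank]
  -- main argument
  ext x
  simp only [Finset.mem_filter, Finset.mem_univ, true_and, Finset.notMem_empty,
    iff_false, not_and]
  intro hx0 htr
  set y : F := x ^ d with hy
  have hy0 : y ≠ 0 := pow_ne_zero _ hx0
  have hyp1 : y ^ (p + 1) = 1 := by
    rw [hy, ← pow_mul, hdpq, ← hF]
    exact FiniteField.pow_card_sub_one_eq_one x hx0
  have hyinv : y ^ p = y⁻¹ := by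
    field_simp
    rw [← pow_succ]; exact hyp1
  -- trace as sum over automorphisms
  have hsum : (0 : F) = ∑ σ : F ≃ₐ[ZMod p] F, σ y := by
    rw [← trace_eq_sum_automorphisms, htr, map_zero]
  rw [← Fintype.sum_bijective _ hfbij _ _ (fun i => rfl)] at hsum
  have hterm : ∀ k : ℕ, y ^ p ^ k = if Even k then y else y⁻¹ := by
    intro k
    induction k with
    | zero => simp
    | succ k ih =>
      rw [pow_succ, pow_mul, ih]
      by_cases hk : Even k
      · rw [if_pos hk, if_neg (by simp [Nat.even_add_one, hk]), hyinv]
      · rw [if_neg hk, if_pos (by simp [Nat.even_add_one, hk]), inv_pow, hyinv, inv_inv]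
  simp only [hφpow, hterm] at hsum
  rw [Fin.sum_univ_eq_sum_range (fun i => if Even i then y else y⁻¹) m, hm,
    alt_sum_aux] at hsum
  -- s is nonzero in F
  have hsF : (s : F) ≠ 0 := by
    rw [Ne, CharP.cast_eq_zero_iff F p]
    intro hps
    have hdm : p ∣ m := hm ▸ hps.mul_left 2
    have hg1 := Nat.dvd_gcd hdm (dvd_refl p)
    rw [hmp] at hg1
    exact hp.one_lt.ne' (Nat.dvd_one.mp hg1)
  have hyy : y + y⁻¹ = 0 := by
    have : (s : F) * (y + y⁻¹) = 0 := by rw [← nsmul_eq_mul, ← hsum]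
    exact (mul_eq_zero.mp this).resolve_left hsF
  -- y^2 = -1
  have hy2 : y ^ 2 = -1 := by
    have h := congrArg (fun z => z * y) hyy
    simp only [add_mul, zero_mul, inv_mul_cancel₀ hy0] at h
    rw [pow_two]; linear_combination h
  have hy4 : y ^ 4 = 1 := by
    have : y ^ 4 = (y ^ 2) ^ 2 := by ring
    rw [this, hy2]; ring
  -- gcd(4, p+1) = 2
  have hgcd : Nat.gcd 4 (p + 1) = 2 := by
    obtain ⟨k, hk⟩ : ∃ k, p + 1 = 2 + k * 4 := ⟨p / 4, by omega⟩
    rw [hk, Nat.gcd_add_mul_right_right 4 2 k]; rfl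
  have hy2' : y ^ 2 = 1 := by
    have h1 : orderOf y ∣ 4 := orderOf_dvd_of_pow_eq_one hy4
    have h2 : orderOf y ∣ p + 1 := orderOf_dvd_of_pow_eq_one hyp1
    have h3 : orderOf y ∣ 2 := hgcd ▸ Nat.dvd_gcd h1 h2
    exact orderOf_dvd_iff_pow_eq_one.mp h3
  rw [hy2'] at hy2
  have h2F : (2 : F) ≠ 0 := by
    rw [Ne, show (2 : F) = ((2 : ℕ) : F) by norm_num, CharP.cast_eq_zero_iff F p]
    intro hcon
    have := Nat.le_of_dvd two_pos hcon
    omega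
  exact h2F (by linear_combination hy2)
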